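/- (Lemma 1: global convergence to the limit cycle of the forced RLC circuit.) Let Q, R ∈ ℂ^{n×n} be Hermitian positive definite, J₁ ∈ ℂ^{n×n} skew-Hermitian, g ∈ ℂⁿ, and suppose x̄ ∈ ℂⁿ satisfies (J₁ - R)Q x̄ + g = 0. Then every differentiable solution x : [t₀,∞) → ℂⁿ of ẋ(t) = (J₁ - R)Q x(t) + g satisfies (1/2)(x(t) - x̄)ᴴ Q (x(t) - x̄) ≤ e^{-2 λ_min(R) λ_min(Q)(t - t₀)} · (1/2)(x(t₀) - x̄)ᴴ Q (x(t₀) - x̄) for all t ≥ t₀; in particular lim_{t→∞} x(t) = x̄, so x̄ is the unique possible limit point of every solution. -/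

import Mathlib

open Matrix
open scoped ComplexOrder

namespace ForcedRLC

variable {n : ℕ}

lemma rc_ofReal : (RCLike.ofReal : ℝ → ℂ) = Complex.ofReal := rfl

lemma dot_UmulVec (U : Matrix (Fin n) (Fin n) ℂ) (u w : Fin n → ℂ) :
    star u ⬝ᵥ (U *ᵥ w) = star (Uᴴ *ᵥ u) ⬝ᵥ w := by
  rw [dotProduct_mulVec, star_mulVec, conjTranspose_conjTranspose]

lemma conj_dot (a b : Fin n → ℂ) :
    (starRingEnd ℂ) (star a ⬝ᵥ b) = star b ⬝ᵥ a := by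
  simp only [dotProduct, map_sum, _root_.map_mul, Pi.star_apply, RCLike.star_def,
    Complex.conj_conj]
  exact Finset.sum_congr rfl fun i _ => mul_comm _ _

/-- coordinates of `u` in the eigenbasis of `M` -/
noncomputable def coords {M : Matrix (Fin n) (Fin n) ℂ} (hM : M.IsHermitian)
    (u : Fin n → ℂ) : Fin n → ℂ :=
  star (hM.eigenvectorUnitary : Matrix (Fin n) (Fin n) ℂ) *ᵥ u

lemma quad_decomp {M : Matrix (Fin n) (Fin n) ℂ} (hM : M.IsHermitian) (u : Fin n → ℂ) :
    star u ⬝ᵥ (M *ᵥ u)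
      = ∑ i, (hM.eigenvalues i : ℂ) * Complex.normSq (coords hM u i) := by
  simp only [coords]
  set U : Matrix (Fin n) (Fin n) ℂ := (hM.eigenvectorUnitary : Matrix (Fin n) (Fin n) ℂ)
  have hs : M = U * diagonal (RCLike.ofReal ∘ hM.eigenvalues) * star U := hM.spectral_theorem
  set v := star U *ᵥ u with hv
  conv_lhs => rw [hs]
  rw [← mulVec_mulVec, ← mulVec_mulVec, dot_UmulVec]
  have hstar : (Uᴴ : Matrix (Fin n) (Fin n) ℂ) = star U := rfl
  rw [hstar, ← hv]
  simp only [dotProduct, mulVec_diagonal, Pi.star_apply, Function.comp_apply, rc_ofReal,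
    RCLike.star_def, Complex.normSq_eq_conj_mul_self]
  congr 1; ext i
  ring

lemma self_decomp {M : Matrix (Fin n) (Fin n) ℂ} (hM : M.IsHermitian) (u : Fin n → ℂ) :
    star u ⬝ᵥ u = ∑ i, (Complex.normSq (coords hM u i) : ℂ) := by
  simp only [coords]
  set U : Matrix (Fin n) (Fin n) ℂ := (hM.eigenvectorUnitary : Matrix (Fin n) (Fin n) ℂ)
  set v := star U *ᵥ u with hv
  have hu : u = U *ᵥ v := by
    rw [hv, mulVec_mulVec, (Matrix.mem_unitaryGroup_iff).mp hM.eigenvectorUnitary.2, one_mulVec]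
  conv_lhs => rw [hu, dot_UmulVec]
  have hstar : (Uᴴ : Matrix (Fin n) (Fin n) ℂ) = star U := rfl
  rw [hstar, mulVec_mulVec, (Matrix.mem_unitaryGroup_iff').mp hM.eigenvectorUnitary.2,
    one_mulVec]
  simp only [dotProduct, Pi.star_apply, RCLike.star_def, Complex.normSq_eq_conj_mul_self]

lemma mul_quad_decomp {M : Matrix (Fin n) (Fin n) ℂ} (hM : M.IsHermitian) (u : Fin n → ℂ) :
    star (M *ᵥ u) ⬝ᵥ (M *ᵥ u)
      = ∑ i, ((hM.eigenvalues i : ℂ))^2 * Complex.normSq (coords hM u i) := by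
  simp only [coords]
  set U : Matrix (Fin n) (Fin n) ℂ := (hM.eigenvectorUnitary : Matrix (Fin n) (Fin n) ℂ)
  have hs : M = U * diagonal (RCLike.ofReal ∘ hM.eigenvalues) * star U := hM.spectral_theorem
  set D : Matrix (Fin n) (Fin n) ℂ := diagonal (RCLike.ofReal ∘ hM.eigenvalues) with hD
  set v := star U *ᵥ u with hv
  have hMu : M *ᵥ u = U *ᵥ (D *ᵥ v) := by
    conv_lhs => rw [hs]
    rw [← mulVec_mulVec, ← mulVec_mulVec]
  rw [hMu, dot_UmulVec]
  have hstar : (Uᴴ : Matrix (Fin n) (Fin n) ℂ) = star U := rfl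
  have h1 : (Uᴴ) *ᵥ (U *ᵥ (D *ᵥ v)) = D *ᵥ v := by
    rw [hstar, mulVec_mulVec, (Matrix.mem_unitaryGroup_iff').mp hM.eigenvectorUnitary.2,
      one_mulVec]
  rw [h1]
  simp only [hD, dotProduct, mulVec_diagonal, Pi.star_apply, Function.comp_apply, rc_ofReal,
    RCLike.star_def, _root_.map_mul, Complex.conj_ofReal, Complex.normSq_eq_conj_mul_self]
  congr 1; ext i
  ring

lemma quad_re {M : Matrix (Fin n) (Fin n) ℂ} (hM : M.IsHermitian) (u : Fin n → ℂ) :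
    (star u ⬝ᵥ (M *ᵥ u)).re = ∑ i, hM.eigenvalues i * Complex.normSq (coords hM u i) := by
  rw [quad_decomp hM u, Complex.re_sum]
  congr 1; ext i
  rw [← Complex.ofReal_mul, Complex.ofReal_re]

lemma self_re {M : Matrix (Fin n) (Fin n) ℂ} (hM : M.IsHermitian) (u : Fin n → ℂ) :
    (star u ⬝ᵥ u).re = ∑ i, Complex.normSq (coords hM u i) := by
  rw [self_decomp hM u, Complex.re_sum]
  simp

lemma mul_quad_re {M : Matrix (Fin n) (Fin n) ℂ} (hM : M.IsHermitian) (u : Fin n → ℂ) :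
    (star (M *ᵥ u) ⬝ᵥ (M *ᵥ u)).re
      = ∑ i, (hM.eigenvalues i)^2 * Complex.normSq (coords hM u i) := by
  rw [mul_quad_decomp hM u, Complex.re_sum]
  congr 1; ext i
  rw [← Complex.ofReal_pow, ← Complex.ofReal_mul, Complex.ofReal_re]


lemma dot_self_re (v : Fin n → ℂ) : (star v ⬝ᵥ v).re = ∑ j, Complex.normSq (v j) := by
  have h : star v ⬝ᵥ v = ∑ j, (Complex.normSq (v j) : ℂ) := by
    simp only [dotProduct, Pi.star_apply, RCLike.star_def, Complex.normSq_eq_conj_mul_self]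
  rw [h, Complex.re_sum]
  simp

lemma iInf_eigen_pos {M : Matrix (Fin n) (Fin n) ℂ} (hM : M.PosDef) [Nonempty (Fin n)] :
    0 < ⨅ i, hM.isHermitian.eigenvalues i := by
  obtain ⟨i0, hi0⟩ := Finite.exists_min (fun i => hM.isHermitian.eigenvalues i)
  exact lt_of_lt_of_le (hM.eigenvalues_pos i0) (le_ciInf hi0)

lemma quad_lower {M : Matrix (Fin n) (Fin n) ℂ} (hM : M.PosDef) (u : Fin n → ℂ)
    [Nonempty (Fin n)] :
    (⨅ i, hM.isHermitian.eigenvalues i) * (star u ⬝ᵥ u).re ≤ (star u ⬝ᵥ (M *ᵥ u)).re := by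
  rw [self_re hM.isHermitian, quad_re hM.isHermitian, Finset.mul_sum]
  refine Finset.sum_le_sum fun i _ => ?_
  exact mul_le_mul_of_nonneg_right (ciInf_le (Finite.bddBelow_range _) i)
    (Complex.normSq_nonneg _)

lemma mul_quad_lower {M : Matrix (Fin n) (Fin n) ℂ} (hM : M.PosDef) (u : Fin n → ℂ)
    [Nonempty (Fin n)] :
    (⨅ i, hM.isHermitian.eigenvalues i) * (star u ⬝ᵥ (M *ᵥ u)).re
      ≤ (star (M *ᵥ u) ⬝ᵥ (M *ᵥ u)).re := by
  rw [quad_re hM.isHermitian, mul_quad_re hM.isHermitian, Finset.mul_sum]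
  refine Finset.sum_le_sum fun i _ => ?_
  have h1 : (⨅ i, hM.isHermitian.eigenvalues i) ≤ hM.isHermitian.eigenvalues i :=
    ciInf_le (Finite.bddBelow_range _) i
  have h2 : 0 < hM.isHermitian.eigenvalues i := hM.eigenvalues_pos i
  have h3 := mul_le_mul_of_nonneg_right h1
    (mul_nonneg h2.le (Complex.normSq_nonneg (coords hM.isHermitian u i)))
  nlinarith [h3]

lemma quad_nonneg {M : Matrix (Fin n) (Fin n) ℂ} (hM : M.IsHermitian) (u : Fin n → ℂ)
    (h : ∀ i, 0 ≤ hM.eigenvalues i) : 0 ≤ (star u ⬝ᵥ (M *ᵥ u)).re := by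
  rw [quad_re hM]
  exact Finset.sum_nonneg fun i _ => mul_nonneg (h i) (Complex.normSq_nonneg _)

lemma deriv_re_eq (Q R J₁ : Matrix (Fin n) (Fin n) ℂ) (hQ : Qᴴ = Q) (hJ : J₁ᴴ = -J₁)
    (e : Fin n → ℂ) :
    ((star ((J₁ - R) *ᵥ (Q *ᵥ e)) ⬝ᵥ (Q *ᵥ e))
        + (star e ⬝ᵥ (Q *ᵥ ((J₁ - R) *ᵥ (Q *ᵥ e))))).re
      = -2 * (star (Q *ᵥ e) ⬝ᵥ (R *ᵥ (Q *ᵥ e))).re := by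
  set u := Q *ᵥ e with hu
  set z : ℂ := star u ⬝ᵥ ((J₁ - R) *ᵥ u) with hz
  have h2 : star e ⬝ᵥ (Q *ᵥ ((J₁ - R) *ᵥ u)) = z := by
    rw [dot_UmulVec, hQ, ← hu]
  have h1 : star ((J₁ - R) *ᵥ u) ⬝ᵥ u = (starRingEnd ℂ) z := by
    rw [hz, conj_dot]
  rw [h1, h2, Complex.add_re, Complex.conj_re]
  have hsplit : z = star u ⬝ᵥ (J₁ *ᵥ u) - star u ⬝ᵥ (R *ᵥ u) := by
    rw [hz, sub_mulVec, dotProduct_sub]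
  have hJre : (star u ⬝ᵥ (J₁ *ᵥ u)).re = 0 := by
    set w : ℂ := star u ⬝ᵥ (J₁ *ᵥ u) with hw
    have hcw : (starRingEnd ℂ) w = -w := by
      rw [hw, conj_dot]
      have : star u ⬝ᵥ (J₁ᴴ *ᵥ u) = star ((J₁ᴴ)ᴴ *ᵥ u) ⬝ᵥ u := dot_UmulVec J₁ᴴ u u
      rw [conjTranspose_conjTranspose] at this
      rw [← this, hJ, neg_mulVec, dotProduct_neg]
    have := congrArg Complex.re hcw
    rw [Complex.conj_re, Complex.neg_re] at this
    linarith
  rw [hsplit, Complex.sub_re, hJre]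
  ring

lemma hasDerivAt_quad (Q : Matrix (Fin n) (Fin n) ℂ) {e : ℝ → Fin n → ℂ} {d : Fin n → ℂ}
    {t : ℝ} (h : HasDerivAt e d t) :
    HasDerivAt (fun s => (star (e s) ⬝ᵥ (Q *ᵥ e s)).re)
      ((star d ⬝ᵥ (Q *ᵥ e t) + star (e t) ⬝ᵥ (Q *ᵥ d)).re) t := by
  have hc : ∀ j, HasDerivAt (fun s => e s j) (d j) t := fun j => hasDerivAt_pi.mp h j
  have hterm : ∀ j, HasDerivAt (fun s => star (e s j) * (Q *ᵥ e s) j)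
      (star (d j) * (Q *ᵥ e t) j + star (e t j) * (Q *ᵥ d) j) t := by
    intro j
    have h1 : HasDerivAt (fun s => star (e s j)) (star (d j)) t := (hc j).star
    have h2 : HasDerivAt (fun s => (Q *ᵥ e s) j) ((Q *ᵥ d) j) t := by
      simp only [mulVec, dotProduct]
      exact HasDerivAt.fun_sum fun k _ => (hc k).const_mul (Q j k)
    exact h1.mul h2
  have hmain : HasDerivAt (fun s => star (e s) ⬝ᵥ (Q *ᵥ e s))
      (star d ⬝ᵥ (Q *ᵥ e t) + star (e t) ⬝ᵥ (Q *ᵥ d)) t := by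
    have heq : (fun s => star (e s) ⬝ᵥ (Q *ᵥ e s))
        = fun s => ∑ j, star (e s j) * (Q *ᵥ e s) j := by
      funext s; simp [dotProduct]
    rw [heq]
    have hsum := HasDerivAt.fun_sum (fun j (_ : j ∈ Finset.univ) => hterm j)
    refine hsum.congr_deriv ?_
    simp [dotProduct, Finset.sum_add_distrib]
  simpa [Function.comp_def] using (Complex.reCLM.hasFDerivAt.comp_hasDerivAt t hmain)

end ForcedRLC

open ForcedRLC

/-- Lemma 1: global convergence to the limit cycle of the forced RLC circuit,
in rotating coordinates.  With `Q, R` Hermitian positive definite, `J₁` skew-Hermitian and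
`x̄` an equilibrium of `ẋ = (J₁ - R) Q x + g`, every solution satisfies the exponential
decay estimate for the shifted Hamiltonian and converges to `x̄`, so `x̄` is the unique
possible limit point of every solution. -/
theorem forced_RLC_global_convergence {n : ℕ}
    (Q R J₁ : Matrix (Fin n) (Fin n) ℂ)
    (hQ : Q.PosDef) (hR : R.PosDef) (hJ : J₁ᴴ = -J₁)
    (g : Fin n → ℂ)
    (xbar : Fin n → ℂ)
    (heq : (J₁ - R).mulVec (Q.mulVec xbar) + g = 0)
    (t₀ : ℝ) (x : ℝ → (Fin n → ℂ))
    (hx : ∀ t, t₀ ≤ t → HasDerivAt x ((J₁ - R).mulVec (Q.mulVec (x t)) + g) t) :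
    (∀ t, t₀ ≤ t →
      (1 / 2 : ℝ) * (star (x t - xbar) ⬝ᵥ Q.mulVec (x t - xbar)).re
        ≤ Real.exp (-2 * (⨅ i, hR.isHermitian.eigenvalues i) *
              (⨅ i, hQ.isHermitian.eigenvalues i) * (t - t₀)) *
            ((1 / 2 : ℝ) * (star (x t₀ - xbar) ⬝ᵥ Q.mulVec (x t₀ - xbar)).re)) ∧
    Filter.Tendsto x Filter.atTop (nhds xbar) := by
  rcases Nat.eq_zero_or_pos n with hn | hn
  · subst hn
    constructor
    · intro t ht
      simp [dotProduct]
    · have hxx : x = fun _ => xbar := by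
        funext t i; exact i.elim0
      rw [hxx]; exact tendsto_const_nhds
  haveI : Nonempty (Fin n) := ⟨⟨0, hn⟩⟩
  set lR := ⨅ i, hR.isHermitian.eigenvalues i with hlR
  set lQ := ⨅ i, hQ.isHermitian.eigenvalues i with hlQ
  have hlRpos : 0 < lR := iInf_eigen_pos hR
  have hlQpos : 0 < lQ := iInf_eigen_pos hQ
  set c : ℝ := 2 * lR * lQ with hc
  have hcpos : 0 < c := by positivity
  set e : ℝ → Fin n → ℂ := fun t => x t - xbar with he
  set W : ℝ → ℝ := fun t => (star (e t) ⬝ᵥ (Q *ᵥ e t)).re with hW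
  -- derivative of the error
  have hde : ∀ t, t₀ ≤ t → HasDerivAt e ((J₁ - R) *ᵥ (Q *ᵥ e t)) t := by
    intro t ht
    have h1 := (hx t ht).sub_const xbar
    have h2 : (J₁ - R) *ᵥ (Q *ᵥ xbar) = -g := eq_neg_of_add_eq_zero_left heq
    have h3 : (J₁ - R) *ᵥ (Q *ᵥ e t) = (J₁ - R) *ᵥ (Q *ᵥ x t) + g := by
      rw [he]
      show (J₁ - R) *ᵥ (Q *ᵥ (x t - xbar)) = _
      rw [mulVec_sub, mulVec_sub, h2, sub_neg_eq_add]
    rw [h3]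
    exact h1
  -- derivative of the shifted Hamiltonian
  have hWd : ∀ t, t₀ ≤ t →
      HasDerivAt W (-2 * (star (Q *ᵥ e t) ⬝ᵥ (R *ᵥ (Q *ᵥ e t))).re) t := by
    intro t ht
    have h := hasDerivAt_quad Q (hde t ht)
    rwa [deriv_re_eq Q R J₁ hQ.isHermitian hJ (e t)] at h
  -- differential inequality
  have hWbound : ∀ t, t₀ ≤ t →
      -2 * (star (Q *ᵥ e t) ⬝ᵥ (R *ᵥ (Q *ᵥ e t))).re ≤ -c * W t := by
    intro t ht
    have hA := quad_lower hR (Q *ᵥ e t)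
    have hB := mul_quad_lower hQ (e t)
    have hC := mul_le_mul_of_nonneg_left hB hlRpos.le
    rw [hc, hW]
    nlinarith [hA, hC]
  -- Gronwall via monotonicity
  set f : ℝ → ℝ := fun t => Real.exp (c * (t - t₀)) * W t with hf
  have hfd : ∀ t, t₀ ≤ t → HasDerivAt f
      (c * Real.exp (c * (t - t₀)) * W t
        + Real.exp (c * (t - t₀)) * (-2 * (star (Q *ᵥ e t) ⬝ᵥ (R *ᵥ (Q *ᵥ e t))).re)) t := by
    intro t ht
    have h1 : HasDerivAt (fun s : ℝ => c * (s - t₀)) c t := by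
      simpa using ((hasDerivAt_id t).sub_const t₀).const_mul c
    have h2 : HasDerivAt (fun s : ℝ => Real.exp (c * (s - t₀)))
        (Real.exp (c * (t - t₀)) * c) t := h1.exp
    have := h2.fun_mul (hWd t ht)
    refine this.congr_deriv ?_
    ring
  have hant : AntitoneOn f (Set.Ici t₀) := by
    apply antitoneOn_of_deriv_nonpos (convex_Ici t₀)
    · intro t ht
      exact (hfd t ht).continuousAt.continuousWithinAt
    · intro t ht
      rw [interior_Ici] at ht
      exact (hfd t (le_of_lt ht)).differentiableAt.differentiableWithinAt
    · intro t ht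
      rw [interior_Ici] at ht
      rw [(hfd t ht.le).deriv]
      have hb := hWbound t ht.le
      have hexppos : (0:ℝ) < Real.exp (c * (t - t₀)) := Real.exp_pos _
      nlinarith [mul_le_mul_of_nonneg_left hb hexppos.le]
  have hdecay : ∀ t, t₀ ≤ t → W t ≤ Real.exp (-c * (t - t₀)) * W t₀ := by
    intro t ht
    have h1 : f t ≤ f t₀ := hant Set.self_mem_Ici ht ht
    have h2 : Real.exp (c * (t - t₀)) * W t ≤ W t₀ := by
      have : f t₀ = W t₀ := by rw [hf]; simp
      rw [hf] at h1
      simpa [this] using h1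
    have h3 : (0:ℝ) < Real.exp (-c * (t - t₀)) := Real.exp_pos _
    have h4 := mul_le_mul_of_nonneg_left h2 h3.le
    calc W t = Real.exp (-c * (t - t₀)) * (Real.exp (c * (t - t₀)) * W t) := by
          rw [← mul_assoc, ← Real.exp_add]
          simp
      _ ≤ Real.exp (-c * (t - t₀)) * W t₀ := h4
  constructor
  · intro t ht
    have h1 := hdecay t ht
    have h2 : Real.exp (-2 * lR * lQ * (t - t₀)) = Real.exp (-c * (t - t₀)) := by
      rw [hc]; ring_nf
    show (1 / 2 : ℝ) * W t ≤ Real.exp (-2 * lR * lQ * (t - t₀)) * ((1 / 2 : ℝ) * W t₀)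
    rw [h2]
    linarith
  · rw [tendsto_pi_nhds]
    intro i
    -- the exponential bound tends to zero
    have htop : Filter.Tendsto (fun t : ℝ => -c * (t - t₀)) Filter.atTop Filter.atBot := by
      apply (Filter.tendsto_const_mul_atBot_of_neg (neg_lt_zero.mpr hcpos)).mpr
      simpa [sub_eq_add_neg] using
        Filter.tendsto_atTop_add_const_right Filter.atTop (-t₀) Filter.tendsto_id
    have hexp0 : Filter.Tendsto (fun t : ℝ => Real.exp (-c * (t - t₀)))
        Filter.atTop (nhds 0) := Real.tendsto_exp_atBot.comp htop
    have hbound0 : Filter.Tendsto (fun t : ℝ => (1 / lQ) * (Real.exp (-c * (t - t₀)) * W t₀))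
        Filter.atTop (nhds 0) := by
      have := (hexp0.mul_const (W t₀)).const_mul (1 / lQ)
      simpa using this
    -- squeeze the normSq of the i-th error component
    have hS : Filter.Tendsto (fun t => Complex.normSq (e t i)) Filter.atTop (nhds 0) := by
      apply squeeze_zero' (Filter.Eventually.of_forall fun t => Complex.normSq_nonneg _)
        _ hbound0
      filter_upwards [Filter.eventually_ge_atTop t₀] with t ht
      have hA := quad_lower hQ (e t)
      have hsum : (star (e t) ⬝ᵥ e t).re = ∑ j, Complex.normSq (e t j) :=
        dot_self_re (e t)
      have hsingle : Complex.normSq (e t i) ≤ ∑ j, Complex.normSq (e t j) :=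
        Finset.single_le_sum (fun j _ => Complex.normSq_nonneg _) (Finset.mem_univ i)
      have hWt : W t ≤ Real.exp (-c * (t - t₀)) * W t₀ := hdecay t ht
      have hWform : lQ * (star (e t) ⬝ᵥ e t).re ≤ W t := hA
      rw [hsum] at hWform
      have h6 : lQ * Complex.normSq (e t i) ≤ Real.exp (-c * (t - t₀)) * W t₀ := by
        calc lQ * Complex.normSq (e t i) ≤ lQ * ∑ j, Complex.normSq (e t j) :=
              mul_le_mul_of_nonneg_left hsingle hlQpos.le
          _ ≤ W t := hWform
          _ ≤ _ := hWt
      calc Complex.normSq (e t i) = (1 / lQ) * (lQ * Complex.normSq (e t i)) := by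
            field_simp
        _ ≤ (1 / lQ) * (Real.exp (-c * (t - t₀)) * W t₀) :=
            mul_le_mul_of_nonneg_left h6 (by positivity)
    -- hence the component converges
    have habs : Filter.Tendsto (fun t => ‖e t i‖) Filter.atTop (nhds 0) := by
      have hcont := (Real.continuous_sqrt.tendsto 0).comp hS
      simpa [Complex.norm_def, Real.sqrt_zero, Function.comp_def] using hcont
    have hzero : Filter.Tendsto (fun t => e t i) Filter.atTop (nhds 0) :=
      tendsto_zero_iff_norm_tendsto_zero.mpr habs
    have hfinal := hzero.add_const (xbar i)
    rw [zero_add] at hfinal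
    have : (fun t => x t i) = fun t => e t i + xbar i := by
      funext t
      rw [he]
      show x t i = (x t - xbar) i + xbar i
      simp
    rw [this]
    exact hfinal
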